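/- Let w be an N×N permutation matrix, identified with the permutation w of {1,…,N} via w e_i = e_{w(i)}. The flag of w lies in the Springer fiber S_X if and only if w^{-1}(1) < w^{-1}(2) < ⋯ < w^{-1}(n) and w^{-1}(n+1) < w^{-1}(n+2) < ⋯ < w^{-1}(N). Moreover, if g is an invertible matrix in canonical form whose flag lies in S_X and w is the permutation matrix whose nonzero entries are in the positions of the pivots of g, then the flag of w also lies in S_X. -/

import Mathlib

attribute [local instance] Classical.propDecidable

noncomputable section

namespace TwoRowSpringer

/-- An arc is a pair `(init, term)` of natural numbers (with `init < term` in matchings). -/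
abbrev Arc : Type := ℕ × ℕ

/-- A matching on `{1,…,N}`: a finite set of arcs with `init < term`, endpoints in `[1,N]`,
and all `2|M|` endpoints distinct. -/
def IsMatching (N : ℕ) (M : Finset Arc) : Prop :=
  (∀ a ∈ M, a.1 < a.2 ∧ 1 ≤ a.1 ∧ a.2 ≤ N) ∧
  (∀ a ∈ M, ∀ b ∈ M, a ≠ b →
    a.1 ≠ b.1 ∧ a.1 ≠ b.2 ∧ a.2 ≠ b.1 ∧ a.2 ≠ b.2)

/-- `a` and `b` cross: `init b < init a < term b < term a`. -/
def Crosses (a b : Arc) : Prop := b.1 < a.1 ∧ a.1 < b.2 ∧ b.2 < a.2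

def IsNoncrossing (M : Finset Arc) : Prop := ∀ a ∈ M, ∀ b ∈ M, ¬ Crosses a b

/-- Standard: every integer strictly under an arc is an endpoint of some arc. -/
def IsStandard (M : Finset Arc) : Prop :=
  ∀ a ∈ M, ∀ i : ℕ, a.1 < i → i < a.2 → ∃ b ∈ M, i = b.1 ∨ i = b.2

/-- `b` is nested above `a`. -/
def NestedAbove (b a : Arc) : Prop := b.1 < a.1 ∧ a.2 < b.2

/-- `b` is the parent of `a` in `M`: nested immediately above `a`. -/
def IsParent (M : Finset Arc) (b a : Arc) : Prop :=
  b ∈ M ∧ NestedAbove b a ∧ ∀ c ∈ M, ¬ (b.1 < c.1 ∧ c.1 < a.1 ∧ a.2 < c.2)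

/-- The ancestor function: the parent if it exists, otherwise `0 = (0,0)`;
note `anc M (0,0) = (0,0)`. -/
def anc (M : Finset Arc) (a : Arc) : Arc :=
  if h : ∃ b, IsParent M b a then h.choose else (0, 0)

/-- The ancestors of `a`: `a`, its parent, the parent of its parent, and so on. -/
def ancestors (M : Finset Arc) (a : Arc) : Set Arc :=
  {b | b ≠ (0, 0) ∧ ∃ k : ℕ, (anc M)^[k] a = b}

def startsArc (M : Finset Arc) (i : ℕ) : Prop := ∃ a ∈ M, a.1 = i

def endsArc (M : Finset Arc) (i : ℕ) : Prop := ∃ a ∈ M, a.2 = i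

def onArc (M : Finset Arc) (i : ℕ) : Prop := startsArc M i ∨ endsArc M i

/-- Number of `j` with `1 ≤ j ≤ i-1` starting an arc of `M`. -/
def Jbeg (M : Finset Arc) (i : ℕ) : ℕ :=
  ((Finset.Ico 1 i).filter fun j => startsArc M j).card

/-- Number of `j` with `1 ≤ j ≤ i-1` ending an arc of `M`. -/
def Jend (M : Finset Arc) (i : ℕ) : ℕ :=
  ((Finset.Ico 1 i).filter fun j => endsArc M j).card

/-- Number of `j` with `1 ≤ j ≤ i-1` on no arc of `M`. -/
def Jnot (M : Finset Arc) (i : ℕ) : ℕ :=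
  ((Finset.Ico 1 i).filter fun j => ¬ onArc M j).card

/-- The permutation `w_M` of `{1,…,N}` attached to a standard noncrossing matching `M`
(`n` is the size of the first Jordan block). -/
def wM (n : ℕ) (M : Finset Arc) (i : ℕ) : ℕ :=
  if startsArc M i then
    ((n : ℤ) + (Jbeg M i : ℤ) + min 0 ((Jnot M i : ℤ) - ((n - M.card : ℕ) : ℤ)) + 1).toNat
  else if endsArc M i then
    Jend M i + max (Jnot M i) (n - M.card) + 1
  else if Jnot M i ≤ n - M.card then
    Jend M i + Jnot M i + 1
  else
    n + Jbeg M i + (Jnot M i - (n - M.card)) + 1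

/-! ### Linear algebra -/

/-- The standard basis vector `e_i` of `ℂ^N` in 1-based indexing (zero if `i ∉ [1,N]`). -/
def eb (N : ℕ) (i : ℕ) : Fin N → ℂ := fun r => if (r : ℕ) + 1 = i then 1 else 0

/-- The nilpotent matrix of Jordan type `(n, N-n)`: `X e_i = e_{i-1}` for `i ∉ {1, n+1}`
(1-based) and `X e_1 = X e_{n+1} = 0`. -/
def Xmat (N n : ℕ) : Matrix (Fin N) (Fin N) ℂ :=
  Matrix.of fun r c => if (c : ℕ) = (r : ℕ) + 1 ∧ (c : ℕ) ≠ n then 1 else 0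

/-- Column `c` of `g` as a vector. -/
def col {N : ℕ} (g : Matrix (Fin N) (Fin N) ℂ) (c : Fin N) : Fin N → ℂ := fun r => g r c

/-- Span of the first `i` columns of `g` (1-based: columns `1,…,i`). -/
def spanCols {N : ℕ} (g : Matrix (Fin N) (Fin N) ℂ) (i : ℕ) : Submodule ℂ (Fin N → ℂ) :=
  Submodule.span ℂ {w | ∃ c : Fin N, (c : ℕ) < i ∧ w = col g c}

/-- The flag of `g` lies in the Springer fiber of `Xmat N n`. -/
def SpringerCond (N n : ℕ) (g : Matrix (Fin N) (Fin N) ℂ) : Prop :=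
  ∀ i : ℕ, ∀ v ∈ spanCols g i, (Xmat N n).mulVec v ∈ spanCols g i

/-- `g` is in canonical form with pivot of column `c` in row `σ c`: each pivot equals 1 and is
the lowest nonzero entry of its column, and entries to the right of a pivot vanish.  The pivots
form the permutation matrix of `σ`. -/
def CanonicalWithPerm {N : ℕ} (g : Matrix (Fin N) (Fin N) ℂ) (σ : Equiv.Perm (Fin N)) : Prop :=
  (∀ c, g (σ c) c = 1) ∧
  (∀ c r, σ c < r → g r c = 0) ∧
  (∀ c c' : Fin N, c < c' → g (σ c) c' = 0)

/-- The permutation matrix of `σ`. -/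
def permMat {N : ℕ} (σ : Equiv.Perm (Fin N)) : Matrix (Fin N) (Fin N) ℂ :=
  Matrix.of fun r c => if r = σ c then 1 else 0

/-- `r_0(α) = J_end(init α) + max{J_not(init α), n - k}`. -/
def r0 (n : ℕ) (M : Finset Arc) (a : Arc) : ℕ :=
  Jend M a.1 + max (Jnot M a.1) (n - M.card)

/-- Extend coordinates indexed by arcs of `M` by zero (this encodes `v₀ = 0`). -/
def extv (M : Finset Arc) (v : Arc → ℂ) : Arc → ℂ := fun a => if a ∈ M then v a else 0

/-- `ι_{α,M}(v) = Σ_{j ≥ 1} v_{anc^{j-1} α} e_{r₀(α)+j}`. -/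
def iota (N n : ℕ) (M : Finset Arc) (v : Arc → ℂ) (a : Arc) : Fin N → ℂ :=
  fun r => if r0 n M a ≤ (r : ℕ) then extv M v ((anc M)^[(r : ℕ) - r0 n M a] a) else 0

/-- The matrix `Im(v)`, whose column `init α` is `ι_{α,M}(v)` and whose other columns vanish. -/
def ImM (N n : ℕ) (M : Finset Arc) (v : Arc → ℂ) : Matrix (Fin N) (Fin N) ℂ :=
  Matrix.of fun r c =>
    if h : ∃ a ∈ M, a.1 = (c : ℕ) + 1 then iota N n M v h.choose r else 0

/-- The permutation matrix of `w_M`. -/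
def wMat (N n : ℕ) (M : Finset Arc) : Matrix (Fin N) (Fin N) ℂ :=
  Matrix.of fun r c => if (r : ℕ) + 1 = wM n M ((c : ℕ) + 1) then 1 else 0

/-- `f_M(v) = w_M + Im(v)`. -/
def fM (N n : ℕ) (M : Finset Arc) (v : Arc → ℂ) : Matrix (Fin N) (Fin N) ℂ :=
  wMat N n M + ImM N n M v

end TwoRowSpringer


namespace TwoRowSpringer

section AuxProofs

variable {N n : ℕ}

lemma X_mulVec (N n : ℕ) (v : Fin N → ℂ) (r : Fin N) :
    (Xmat N n).mulVec v r =
      if h : (r : ℕ) + 1 < N ∧ (r : ℕ) + 1 ≠ n then v ⟨(r : ℕ) + 1, h.1⟩ else 0 := by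
  unfold Xmat Matrix.mulVec dotProduct
  simp only [Matrix.of_apply, ite_mul, one_mul, zero_mul]
  split
  · rename_i h
    rw [Finset.sum_eq_single (⟨(r : ℕ) + 1, h.1⟩ : Fin N)]
    · simp [h.2]
    · intro b _ hb
      rw [if_neg]
      intro ⟨hb1, _⟩
      exact hb (Fin.ext hb1)
    · simp
  · rename_i h
    apply Finset.sum_eq_zero
    intro b _
    rw [if_neg]
    intro ⟨hb1, hb2⟩
    exact h ⟨hb1 ▸ b.isLt, hb1 ▸ hb2⟩

lemma mem_spanCols {g : Matrix (Fin N) (Fin N) ℂ} {i : ℕ} {v : Fin N → ℂ}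
    (hv : v ∈ spanCols g i) :
    ∃ μ : Fin N → ℂ, (∀ c : Fin N, i ≤ (c : ℕ) → μ c = 0) ∧
      v = ∑ c, μ c • col g c := by
  induction hv using Submodule.span_induction with
  | mem w hw =>
    obtain ⟨c, hc, rfl⟩ := hw
    refine ⟨fun c' => if c' = c then 1 else 0, fun c' hc' => ?_, ?_⟩
    · show (if c' = c then (1:ℂ) else 0) = 0
      rw [if_neg]; rintro rfl; omega
    · simp [ite_smul]
  | zero => exact ⟨0, fun _ _ => rfl, by simp⟩
  | add x y hx hy ihx ihy =>
    obtain ⟨μ, hμ, rfl⟩ := ihx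
    obtain ⟨ν, hν, rfl⟩ := ihy
    exact ⟨μ + ν, fun c hc => by simp [hμ c hc, hν c hc],
      by rw [← Finset.sum_add_distrib]; simp [add_smul]⟩
  | smul a x hx ih =>
    obtain ⟨μ, hμ, rfl⟩ := ih
    exact ⟨a • μ, fun c hc => by simp [hμ c hc],
      by rw [Finset.smul_sum]; simp [smul_smul]⟩

lemma pivot_lt {g : Matrix (Fin N) (Fin N) ℂ} {σ : Equiv.Perm (Fin N)}
    (hg : CanonicalWithPerm g σ) {i : ℕ} {v : Fin N → ℂ}
    (hv : v ∈ spanCols g i) (m : Fin N)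
    (h0 : ∀ t : Fin N, m < t → v t = 0) (hm : v m ≠ 0) :
    ((σ⁻¹ m : Fin N) : ℕ) < i := by
  obtain ⟨μ, hsupp, rfl⟩ := mem_spanCols hv
  have hval : ∀ t : Fin N, (∑ c, μ c • col g c) t = ∑ c, μ c * g t c := by
    intro t
    rw [Finset.sum_apply]
    rfl
  have key : ∀ d : ℕ, ∀ c : Fin N, N - (σ c : ℕ) ≤ d → m < σ c → μ c = 0 := by
    intro d
    induction d with
    | zero => intro c hc _; have := (σ c).isLt; omega
    | succ d ih =>
      intro c hc hmc
      have hv0 := h0 (σ c) hmc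
      rw [hval] at hv0
      rw [Finset.sum_eq_single c] at hv0
      · rwa [hg.1, mul_one] at hv0
      · intro b _ hb
        rcases lt_trichotomy (σ b) (σ c) with h | h | h
        · rw [hg.2.1 b (σ c) h, mul_zero]
        · exact absurd (σ.injective h) hb
        · rw [ih b (by have := (σ b).isLt; have : (σ c : ℕ) < (σ b : ℕ) := h; omega)
            (lt_trans hmc h), zero_mul]
      · simp
  have hμm : μ (σ⁻¹ m) ≠ 0 := by
    intro hz
    apply hm
    rw [hval]
    apply Finset.sum_eq_zero
    intro b _
    rcases lt_trichotomy (σ b) m with h | h | h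
    · rw [hg.2.1 b m h, mul_zero]
    · have : b = σ⁻¹ m := by rw [← h]; simp
      rw [this, hz, zero_mul]
    · rw [key N b (by omega) h, zero_mul]
  by_contra hlt
  exact hμm (hsupp _ (by omega))

lemma col_mem_spanCols (g : Matrix (Fin N) (Fin N) ℂ) (c : Fin N) {i : ℕ}
    (hc : (c : ℕ) < i) : col g c ∈ spanCols g i :=
  Submodule.subset_span ⟨c, hc, rfl⟩

/-- The consecutive condition from a canonical matrix in the Springer fiber. -/
lemma consec {g : Matrix (Fin N) (Fin N) ℂ} {σ : Equiv.Perm (Fin N)}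
    (hg : CanonicalWithPerm g σ) (hs : SpringerCond N n g)
    (m r : Fin N) (hmr : (m : ℕ) + 1 = (r : ℕ)) (hrn : (r : ℕ) ≠ n) :
    σ⁻¹ m < σ⁻¹ r := by
  set c := σ⁻¹ r with hc
  have hσc : σ c = r := by simp [hc]
  have hw := hs ((c : ℕ) + 1) (col g c) (col_mem_spanCols g c (by omega))
  have hwt : ∀ t : Fin N, (Xmat N n).mulVec (col g c) t =
      if h : (t : ℕ) + 1 < N ∧ (t : ℕ) + 1 ≠ n then g ⟨(t : ℕ) + 1, h.1⟩ c else 0 :=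
    fun t => X_mulVec N n (col g c) t
  have h0 : ∀ t : Fin N, m < t → (Xmat N n).mulVec (col g c) t = 0 := by
    intro t ht
    rw [hwt]
    split
    · rename_i h
      apply hg.2.1
      rw [Fin.lt_def]
      show (σ c : ℕ) < (t : ℕ) + 1
      rw [hσc]
      have : (m : ℕ) < (t : ℕ) := ht
      omega
    · rfl
  have hmne : (Xmat N n).mulVec (col g c) m ≠ 0 := by
    rw [hwt]
    have hlt : (m : ℕ) + 1 < N := hmr ▸ r.isLt
    rw [dif_pos ⟨hlt, by omega⟩]
    have : (⟨(m : ℕ) + 1, hlt⟩ : Fin N) = σ c := by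
      apply Fin.ext; rw [hσc]; exact hmr
    rw [this, hg.1]
    exact one_ne_zero
  have := pivot_lt hg hw m h0 hmne
  have hne : σ⁻¹ m ≠ σ⁻¹ r := by
    intro h
    have : m = r := σ⁻¹.injective h
    rw [← this] at hmr; omega
  rw [Fin.lt_def]
  have h2 : ((σ⁻¹ m : Fin N) : ℕ) ≠ ((σ⁻¹ r : Fin N) : ℕ) := fun h => hne (Fin.ext h)
  omega

lemma chain {σ : Equiv.Perm (Fin N)}
    (hC : ∀ m r : Fin N, (m : ℕ) + 1 = (r : ℕ) → (r : ℕ) ≠ n → σ⁻¹ m < σ⁻¹ r) :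
    ∀ k : ℕ, ∀ r r' : Fin N, (r' : ℕ) = (r : ℕ) + k + 1 →
      ((r' : ℕ) < n ∨ n ≤ (r : ℕ)) → σ⁻¹ r < σ⁻¹ r' := by
  intro k
  induction k with
  | zero =>
    intro r r' h hb
    exact hC r r' (by omega) (by omega)
  | succ k ih =>
    intro r r' h hb
    have hmid : (r : ℕ) + k + 1 < N := by have := r'.isLt; omega
    set mid : Fin N := ⟨(r : ℕ) + k + 1, hmid⟩ with hm
    have h1 : σ⁻¹ r < σ⁻¹ mid := ih r mid rfl (by rcases hb with h' | h' <;> simp [hm] <;> omega)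
    have h2 : σ⁻¹ mid < σ⁻¹ r' := hC mid r' (by simp [hm]; omega) (by omega)
    exact lt_trans h1 h2

lemma permMat_canonical (σ : Equiv.Perm (Fin N)) : CanonicalWithPerm (permMat σ) σ := by
  refine ⟨fun c => by simp [permMat], fun c r h => ?_, fun c c' h => ?_⟩
  · exact if_neg h.ne'
  · exact if_neg (fun he => absurd (σ.injective he) h.ne)

lemma springer_perm {σ : Equiv.Perm (Fin N)}
    (hC : ∀ m r : Fin N, (m : ℕ) + 1 = (r : ℕ) → (r : ℕ) ≠ n → σ⁻¹ m < σ⁻¹ r) :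
    SpringerCond N n (permMat σ) := by
  intro i v hv
  induction hv using Submodule.span_induction with
  | mem w hw =>
    obtain ⟨c, hc, rfl⟩ := hw
    by_cases h1 : 0 < (σ c : ℕ) ∧ (σ c : ℕ) ≠ n
    · have hmlt : (σ c : ℕ) - 1 < N := by have := (σ c).isLt; omega
      have hval : ((⟨(σ c : ℕ) - 1, hmlt⟩ : Fin N) : ℕ) = (σ c : ℕ) - 1 := rfl
      have heq : (Xmat N n).mulVec (col (permMat σ) c)
          = col (permMat σ) (σ⁻¹ ⟨(σ c : ℕ) - 1, hmlt⟩) := by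
        funext t
        rw [X_mulVec]
        show _ = (permMat σ) t (σ⁻¹ ⟨(σ c : ℕ) - 1, hmlt⟩)
        unfold permMat
        simp only [Matrix.of_apply, Equiv.Perm.coe_inv, Equiv.apply_symm_apply]
        split
        · rename_i h
          show (if (⟨(t : ℕ) + 1, h.1⟩ : Fin N) = σ c then (1:ℂ) else 0) = _
          by_cases he : (t : ℕ) + 1 = (σ c : ℕ)
          · rw [if_pos (Fin.ext he), if_pos (Fin.ext (by rw [hval]; omega))]
          · rw [if_neg (fun hh => he (congrArg Fin.val hh)), if_neg (fun hh => he (by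
              have h2 := congrArg Fin.val hh
              rw [hval] at h2
              omega))]
        · rename_i h
          rw [if_neg]
          intro hh
          have h2 := congrArg Fin.val hh
          rw [hval] at h2
          have := (σ c).isLt
          omega
      rw [heq]
      apply col_mem_spanCols
      have hlt2 : σ⁻¹ (⟨(σ c : ℕ) - 1, hmlt⟩ : Fin N) < σ⁻¹ (σ c) :=
        hC ⟨(σ c : ℕ) - 1, hmlt⟩ (σ c) (by rw [hval]; omega) h1.2
      rw [show σ⁻¹ (σ c) = c from σ.symm_apply_apply c] at hlt2
      have : ((σ⁻¹ (⟨(σ c : ℕ) - 1, hmlt⟩ : Fin N) : Fin N) : ℕ) < (c : ℕ) := hlt2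
      omega
    · have heq : (Xmat N n).mulVec (col (permMat σ) c) = 0 := by
        funext t
        rw [X_mulVec]
        show _ = (0 : ℂ)
        split
        · rename_i h
          show (if (⟨(t : ℕ) + 1, h.1⟩ : Fin N) = σ c then (1:ℂ) else 0) = 0
          rw [if_neg]
          intro hh
          have h2 : (t : ℕ) + 1 = ((σ c : Fin N) : ℕ) := congrArg Fin.val hh
          omega
        · rfl
      rw [heq]
      exact Submodule.zero_mem _
  | zero => rw [Matrix.mulVec_zero]; exact Submodule.zero_mem _
  | add x y hx hy ihx ihy => rw [Matrix.mulVec_add]; exact Submodule.add_mem _ ihx ihy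
  | smul a x hx ih => rw [Matrix.mulVec_smul]; exact Submodule.smul_mem _ _ ih

end AuxProofs


/-- Corollary 2.4.  A permutation flag lies in the Springer fiber iff the
pivots increase left-to-right within the first `n` rows and within the last `N-n` rows;
moreover the permutation flag of the pivots of any canonical-form matrix in the Springer fiber
again lies in the Springer fiber.  (Indices are 0-based: 1-based row `r+1`.) -/
theorem permutation_flag_in_springer
    (N n : ℕ) (hn : 1 ≤ n) (hnN : n ≤ N - 1) :
    (∀ σ : Equiv.Perm (Fin N),
      SpringerCond N n (permMat σ) ↔
        ((∀ r r' : Fin N, r < r' → (r' : ℕ) < n → σ⁻¹ r < σ⁻¹ r') ∧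
         (∀ r r' : Fin N, n ≤ (r : ℕ) → r < r' → σ⁻¹ r < σ⁻¹ r'))) ∧
    (∀ (g : Matrix (Fin N) (Fin N) ℂ) (σ : Equiv.Perm (Fin N)),
      IsUnit g → CanonicalWithPerm g σ → SpringerCond N n g →
        SpringerCond N n (permMat σ)) := by
  constructor
  · intro σ
    constructor
    · intro hs
      have hC : ∀ m r : Fin N, (m : ℕ) + 1 = (r : ℕ) → (r : ℕ) ≠ n → σ⁻¹ m < σ⁻¹ r :=
        fun m r hmr hrn => consec (permMat_canonical σ) hs m r hmr hrn
      constructor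
      · intro r r' hlt hn'
        exact chain hC ((r' : ℕ) - (r : ℕ) - 1) r r'
          (by have : (r : ℕ) < (r' : ℕ) := hlt; omega) (Or.inl hn')
      · intro r r' hn' hlt
        exact chain hC ((r' : ℕ) - (r : ℕ) - 1) r r'
          (by have : (r : ℕ) < (r' : ℕ) := hlt; omega) (Or.inr hn')
    · rintro ⟨h1, h2⟩
      apply springer_perm
      intro m r hmr hrn
      have hlt : m < r := by rw [Fin.lt_def]; omega
      rcases lt_or_ge (r : ℕ) n with h | h
      · exact h1 m r hlt h
      · exact h2 m r (by omega) hlt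
  · intro g σ _ hg hs
    exact springer_perm (fun m r hmr hrn => consec hg hs m r hmr hrn)


end TwoRowSpringer
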